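/- Equivalence of the moments of the relative particle number: let φ ∈ L²(ℝ³,ℂ) be normalized and for each N ≥ 2 let Ψ_N ∈ L²(ℝ^{3N},ℂ) with ‖Ψ_N‖ = 1. Then for all real numbers j, l > 0: if lim_{N→∞} ⟨Ψ_N, (n̂)^l Ψ_N⟩ = 0 then lim_{N→∞} ⟨Ψ_N, (n̂)^j Ψ_N⟩ = 0. In particular, lim_{N→∞} ‖n̂ Ψ_N‖ = 0 if and only if lim_{N→∞} ⟨Ψ_N, (n̂)^j Ψ_N⟩ = 0 for some (equivalently, for every) j > 0. -/

import Mathlib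

open MeasureTheory Filter Finset Function
open scoped ENNReal ComplexConjugate Classical

noncomputable section

abbrev R3 : Type := EuclideanSpace ℝ (Fin 3)
abbrev NBody (N : ℕ) : Type := Fin N → R3
abbrev HN (N : ℕ) := Lp ℂ 2 (volume : Measure (NBody N))
abbrev H1 := Lp ℂ 2 (volume : Measure R3)
abbrev Op (N : ℕ) := HN N →L[ℂ] HN N

/-- `IsCondProj N φ j P` says that `P` is the projector `p_j` onto `φ` in the `j`-th variable. -/
def IsCondProj (N : ℕ) (φ : H1) (j : Fin N) (P : Op N) : Prop :=
  ∀ Ψ : HN N, ∀ᵐ x : NBody N,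
    P Ψ x = φ (x j) * ∫ y : R3, conj (φ y) * Ψ (Function.update x j y)

/-- `q_j := 1 - p_j`. -/
def qOp {N : ℕ} (p : Fin N → Op N) (j : Fin N) : Op N := 1 - p j

/-- the set of the last `j` particle indices. -/
def lastIdx (N j : ℕ) : Finset (Fin N) := Finset.univ.filter fun i => N - j ≤ (i : ℕ)

/-- `P_{j,k}`. -/
def Pjk {N : ℕ} (p : Fin N → Op N) (j k : ℕ) : Op N :=
  ∑ S ∈ Finset.univ.filter (fun S : Finset (Fin N) => S ⊆ lastIdx N j ∧ S.card = k),
    (List.ofFn fun i : Fin N =>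
      if i ∈ S then qOp p i else if i ∈ lastIdx N j then p i else 1).prod

/-- `P_k := P_{N,k}`. -/
def Pk {N : ℕ} (p : Fin N → Op N) (k : ℕ) : Op N := Pjk p N k

/-- `f̂ := ∑_{k=0}^N f(k) P_k`. -/
def fhat {N : ℕ} (p : Fin N → Op N) (f : ℕ → ℝ) : Op N :=
  ∑ k ∈ Finset.range (N + 1), (f k : ℂ) • Pk p k

/-- `P_k` with integer index, `= 0` for `k < 0` or `k > N`. -/
def PkZ {N : ℕ} (p : Fin N → Op N) (k : ℤ) : Op N :=
  if 0 ≤ k ∧ k ≤ (N : ℤ) then Pk p k.toNat else 0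

/-- the shifted operator `f̂_d := ∑_{j=d}^{N+d} f(j-d) P_j`. -/
def fhatShift {N : ℕ} (p : Fin N → Op N) (f : ℕ → ℝ) (d : ℤ) : Op N :=
  ∑ k ∈ Finset.range (N + 1), (f k : ℂ) • PkZ p ((k : ℤ) + d)

/-- the weight `n(k) = √(k/N)`. -/
def nfun (N : ℕ) : ℕ → ℝ := fun k => Real.sqrt ((k : ℝ) / N)

/-- `m̂ := ∑_{k=1}^N m(k) P_k` for weights on `{1,…,N}`. -/
def mhat {N : ℕ} (p : Fin N → Op N) (m : ℕ → ℝ) : Op N :=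
  ∑ k ∈ Finset.Icc 1 N, (m k : ℂ) • Pk p k

/-- symmetry of a wave function under permutations of the `N` particles. -/
def IsSymmetricWF (N : ℕ) (Ψ : HN N) : Prop :=
  ∀ σ : Equiv.Perm (Fin N), ∀ᵐ x : NBody N, Ψ (x ∘ σ) = Ψ x

/-- `M` is the operator of multiplication by `F`. -/
def IsMulOp (N : ℕ) (F : NBody N → ℂ) (M : Op N) : Prop :=
  ∀ Ψ : HN N, ∀ᵐ x : NBody N, M Ψ x = F x * Ψ x

/-- the function defining the multiplication operator `h_{1,2}`. -/
def h12F (N : ℕ) (a : ℝ) (v : R3 → ℝ) (φf : R3 → ℂ) (j k : Fin N) : NBody N → ℂ :=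
  fun x => ((((N : ℝ) - 1) * v (x j - x k)
    - a / 2 * ‖φf (x j)‖ ^ 2 - a / 2 * ‖φf (x k)‖ ^ 2 : ℝ) : ℂ)

/-- the scaled interaction `v_N ∈ 𝒱_β`. -/
def InteractionOK (β a R C0 δ : ℝ) (N : ℕ) (v : R3 → ℝ) : Prop :=
  Measurable v ∧ (∀ x, 0 ≤ v x) ∧ (∀ x y : R3, ‖x‖ = ‖y‖ → v x = v y) ∧
  (∀ x : R3, R * (N : ℝ) ^ (-β) < ‖x‖ → v x = 0) ∧
  (∀ x, v x ≤ C0 * (N : ℝ) ^ (-1 + 3 * β)) ∧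
  |(∫ x : R3, v x) - a / N| ≤ C0 * (N : ℝ) ^ (-1 - δ)

/-- `α(Ψ) := ⟨Ψ, n̂ Ψ⟩`. -/
def alphaWF {N : ℕ} (p : Fin N → Op N) (Ψ : HN N) : ℝ :=
  (inner ℂ Ψ ((fhat p (nfun N)) Ψ) : ℂ).re

/-- `‖∇_j f(x)‖²`, the squared gradient in the `j`-th variable. -/
def grad1Sq (N : ℕ) (j : Fin N) (f : NBody N → ℂ) (x : NBody N) : ℝ :=
  ‖fderiv ℝ (fun y : R3 => f (Function.update x j y)) (x j)‖ ^ 2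

/-- a function representative of `q_j Ψ`. -/
def q1Fun (N : ℕ) (j : Fin N) (φf : R3 → ℂ) (f : NBody N → ℂ) : NBody N → ℂ :=
  fun x => f x - φf (x j) * ∫ y : R3, conj (φf y) * f (Function.update x j y)

/-- `𝒮_j`, the region where particle `j` is at distance `≥ N^{-26/27}` from all others. -/
def S1Set (N : ℕ) (j : Fin N) : Set (NBody N) :=
  {x | ∀ k, k ≠ j → (N : ℝ) ^ (-(26 / 27 : ℝ)) ≤ dist (x j) (x k)}

/-- the Laplacian on `ℝ³`. -/
def lap3 {E : Type*} [NormedAddCommGroup E] [NormedSpace ℝ E] (f : R3 → E) (x : R3) : E :=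
  ∑ i : Fin 3, fderiv ℝ (fun y => fderiv ℝ f y (EuclideanSpace.single i 1)) x
    (EuclideanSpace.single i 1)

/-- the Laplacian on `ℝ^{3N}`. -/
def lapN (N : ℕ) (f : NBody N → ℂ) (x : NBody N) : ℂ :=
  ∑ j : Fin N, ∑ i : Fin 3,
    fderiv ℝ (fun y => fderiv ℝ f y (Pi.single j (EuclideanSpace.single i 1))) x
      (Pi.single j (EuclideanSpace.single i 1))

/-- the Gross–Pitaevskii energy functional. -/
def EGP (a : ℝ) (At : R3 → ℝ) (φf : R3 → ℂ) : ℝ :=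
  (∫ x : R3, ‖fderiv ℝ φf x‖ ^ 2) + ∫ x : R3, (At x + a * ‖φf x‖ ^ 2) * ‖φf x‖ ^ 2


/-- the expectation `⟨Ψ, (n̂)^γ Ψ⟩` of the `γ`-th power of the relative particle number. -/
def momentWF {N : ℕ} (p : Fin N → Op N) (Ψ : HN N) (γ : ℝ) : ℝ :=
  (inner ℂ Ψ ((fhat p (fun k => ((k : ℝ) / N) ^ (γ / 2 : ℝ))) Ψ) : ℂ).re


set_option maxHeartbeats 1000000
set_option synthInstance.maxHeartbeats 400000

namespace Moments

variable {N : ℕ}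

abbrev bsp (j : Fin N) : Type := {k : Fin N // k ≠ j} → R3

def gf (j : Fin N) (u : bsp j) (y : R3) : NBody N := fun k => if h : k = j then y else u ⟨k, h⟩

def rho (j : Fin N) (x : NBody N) : bsp j := fun k => x k.1

lemma gf_rho_update (j : Fin N) (x : NBody N) (y : R3) :
    gf j (rho j x) y = Function.update x j y := by
  funext k
  rw [Function.update_apply]
  by_cases h : k = j <;> simp [gf, rho, h]

lemma rho_gf (j : Fin N) (u : bsp j) (y : R3) : rho j (gf j u y) = u := by
  funext k
  simp [gf, rho, k.2]

lemma gf_apply_j (j : Fin N) (u : bsp j) (y : R3) : gf j u y j = y := by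
  simp [gf]

lemma rho_update (j : Fin N) (x : NBody N) (y : R3) :
    rho j (Function.update x j y) = rho j x := by
  funext k
  simp [rho, Function.update_apply, k.2]

instance uniqueNE (j : Fin N) : Unique {k : Fin N // ¬ k ≠ j} where
  default := ⟨j, by simp⟩
  uniq := fun k => Subtype.ext (not_not.mp k.2)

def holeEquiv (j : Fin N) : NBody N ≃ᵐ (bsp j × R3) :=
  (MeasurableEquiv.piEquivPiSubtypeProd (fun _ : Fin N => R3) (fun k => k ≠ j)).trans
    ((MeasurableEquiv.refl (bsp j)).prodCongr
      (MeasurableEquiv.piUnique (fun _ : {k : Fin N // ¬ k ≠ j} => R3)))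

lemma holeEquiv_fst (j : Fin N) (x : NBody N) : (holeEquiv j x).1 = rho j x := rfl

lemma holeEquiv_symm_apply (j : Fin N) (z : bsp j × R3) :
    (holeEquiv j).symm z = gf j z.1 z.2 := by
  funext k
  show (MeasurableEquiv.piEquivPiSubtypeProd (fun _ : Fin N => R3) (fun k => k ≠ j)).symm
      (z.1, (MeasurableEquiv.piUnique _).symm z.2) k = _
  by_cases h : k = j <;>
    simp [MeasurableEquiv.piEquivPiSubtypeProd, Equiv.piEquivPiSubtypeProd,
      MeasurableEquiv.piUnique, Equiv.piUnique, gf, h, uniqueElim]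

lemma gf_eq_symm (j : Fin N) :
    (fun z : bsp j × R3 => gf j z.1 z.2) = ⇑(holeEquiv j).symm := by
  funext z; rw [holeEquiv_symm_apply]

lemma mpHole (j : Fin N) : MeasurePreserving (holeEquiv j) volume volume := by
  have h1 := volume_preserving_piEquivPiSubtypeProd (fun _ : Fin N => R3) (fun k => k ≠ j)
  have h2 := (MeasurePreserving.id (volume : Measure (bsp j))).prod
      (volume_preserving_piUnique (fun _ : {k : Fin N // ¬ k ≠ j} => R3))
  rw [← Measure.volume_eq_prod] at h2
  exact h2.comp h1

lemma mpG (j : Fin N) :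
    MeasurePreserving (fun z : bsp j × R3 => gf j z.1 z.2) volume volume := by
  rw [gf_eq_symm]
  exact (mpHole j).symm

lemma embG (j : Fin N) : MeasurableEmbedding (fun z : bsp j × R3 => gf j z.1 z.2) := by
  rw [gf_eq_symm]
  exact (holeEquiv j).symm.measurableEmbedding

lemma ae_slice_u (j : Fin N) {s : Set (NBody N)} (hs : volume s = 0) :
    ∀ᵐ u : bsp j, ∀ᵐ y : R3, gf j u y ∉ s := by
  have h0 : volume ((fun z : bsp j × R3 => gf j z.1 z.2) ⁻¹' s) = 0 := by
    rw [(mpG j).measure_preimage (NullMeasurableSet.of_null hs)]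
    exact hs
  have h2 : ∀ᵐ z : bsp j × R3, gf j z.1 z.2 ∉ s := by
    rw [ae_iff]
    simp only [not_not]
    exact h0
  rw [Measure.volume_eq_prod] at h2
  exact Measure.ae_ae_of_ae_prod h2

lemma ae_base (j : Fin N) {Q : bsp j → Prop} (hQ : ∀ᵐ u : bsp j, Q u) :
    ∀ᵐ x : NBody N, Q (rho j x) := by
  rw [ae_iff] at hQ ⊢
  obtain ⟨T', hTT', hT'meas, hT'⟩ := exists_measurable_superset_of_null hQ
  have hsub : {x : NBody N | ¬ Q (rho j x)} ⊆ (holeEquiv j) ⁻¹' (T' ×ˢ Set.univ) := by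
    intro x hx
    exact ⟨hTT' hx, trivial⟩
  refine measure_mono_null hsub ?_
  rw [(mpHole j).measure_preimage ((hT'meas.prod MeasurableSet.univ).nullMeasurableSet),
    Measure.volume_eq_prod, Measure.prod_prod, hT', zero_mul]

lemma ae_slice (j : Fin N) {s : Set (NBody N)} (hs : volume s = 0) :
    ∀ᵐ x : NBody N, ∀ᵐ y : R3, Function.update x j y ∉ s := by
  have h := ae_base j (ae_slice_u j hs)
  filter_upwards [h] with x hx
  filter_upwards [hx] with y hy
  rwa [gf_rho_update] at hy

lemma integral_hole (j : Fin N) (F : NBody N → ℂ) (hF : Integrable F volume) :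
    ∫ x, F x = ∫ u : bsp j, ∫ y : R3, F (gf j u y) := by
  rw [← (mpG j).integral_comp (embG j) F]
  have hint : Integrable (fun z : bsp j × R3 => F (gf j z.1 z.2)) volume :=
    ((mpG j).integrable_comp_emb (embG j)).mpr hF
  rw [Measure.volume_eq_prod] at hint ⊢
  exact integral_prod _ hint


lemma ae_slice' (j : Fin N) {P : NBody N → Prop} (h : ∀ᵐ x, P x) :
    ∀ᵐ x : NBody N, ∀ᵐ y : R3, P (Function.update x j y) := by
  filter_upwards [ae_slice j (ae_iff.mp h)] with x hx
  filter_upwards [hx] with y hy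
  exact not_not.mp hy

lemma ae_slice_u' (j : Fin N) {P : NBody N → Prop} (h : ∀ᵐ x, P x) :
    ∀ᵐ u : bsp j, ∀ᵐ y : R3, P (gf j u y) := by
  filter_upwards [ae_slice_u j (ae_iff.mp h)] with u hu
  filter_upwards [hu] with y hy
  exact not_not.mp hy

def Bf (φ : H1) (j : Fin N) (f : NBody N → ℂ) (u : bsp j) : ℂ :=
  ∫ y : R3, conj (φ y) * f (gf j u y)

lemma phi_int {φ : H1} (hφ : ‖φ‖ = 1) : ∫ y : R3, conj (φ y) * φ y = 1 := by
  have h1 : (inner ℂ φ φ : ℂ) = ∫ y : R3, conj (φ y) * φ y := by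
    rw [L2.inner_def]
    congr 1
    funext a
    rw [RCLike.inner_apply]
    ring
  have h2 : (inner ℂ φ φ : ℂ) = (1 : ℂ) := by
    rw [inner_self_eq_norm_sq_to_K, hφ]
    norm_num
  rw [← h1, h2]

lemma form {φ : H1} {j : Fin N} {P : Op N} (hP : IsCondProj N φ j P) (Ψ : HN N) :
    ∀ᵐ x : NBody N, P Ψ x = φ (x j) * Bf φ j (⇑Ψ) (rho j x) := by
  filter_upwards [hP Ψ] with x hx
  rw [hx, Bf]
  simp_rw [gf_rho_update]

theorem proj_idem {φ : H1} (hφ : ‖φ‖ = 1) {j : Fin N} {P : Op N}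
    (hP : IsCondProj N φ j P) (Ψ : HN N) : P (P Ψ) = P Ψ := by
  apply Lp.ext
  have h1 := form hP (P Ψ)
  have h2 := form hP Ψ
  have hu : ∀ᵐ u : bsp j, Bf φ j (⇑(P Ψ)) u = Bf φ j (⇑Ψ) u := by
    filter_upwards [ae_slice_u' j h2] with u hu2
    have hcong : (fun y : R3 => conj (φ y) * (P Ψ) (gf j u y)) =ᵐ[volume]
        (fun y : R3 => (conj (φ y) * φ y) • Bf φ j (⇑Ψ) u) := by
      filter_upwards [hu2] with y hy
      rw [hy, gf_apply_j, rho_gf, smul_eq_mul]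
      ring
    rw [Bf, integral_congr_ae hcong, integral_smul_const, phi_int hφ, one_smul]
  filter_upwards [h1, h2, ae_base j hu] with x e1 e2 e3
  rw [e1, e3, ← e2]

theorem proj_sa {φ : H1} {j : Fin N} {P : Op N} (hP : IsCondProj N φ j P) (Φ Ψ : HN N) :
    (inner ℂ (P Φ) Ψ : ℂ) = inner ℂ Φ (P Ψ) := by
  set A := Bf φ j (⇑Φ) with hA
  set B := Bf φ j (⇑Ψ) with hB
  have hR : (inner ℂ Φ (P Ψ) : ℂ) = ∫ u : bsp j, conj (A u) * B u := by
    rw [L2.inner_def]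
    have hInt : Integrable (fun x : NBody N => (inner ℂ (Φ x) (P Ψ x) : ℂ)) volume :=
      L2.integrable_inner (𝕜 := ℂ) Φ (P Ψ)
    have hcong : (fun x : NBody N => (inner ℂ (Φ x) (P Ψ x) : ℂ)) =ᵐ[volume]
        (fun x => conj (Φ x) * (φ (x j) * B (rho j x))) := by
      filter_upwards [form hP Ψ] with x hx
      rw [RCLike.inner_apply, mul_comm (P Ψ x), hx]
    rw [integral_congr_ae hcong, integral_hole j _ (hInt.congr hcong)]
    refine congrArg _ (funext fun u => ?_)
    simp only [gf_apply_j, rho_gf]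
    have : (fun y : R3 => conj (Φ (gf j u y)) * (φ y * B u))
        = fun y : R3 => (conj (conj (φ y) * Φ (gf j u y))) • B u := by
      funext y
      simp only [map_mul, RingHomCompTriple.comp_apply, RingHom.id_apply, RCLike.conj_conj, smul_eq_mul]
      ring
    rw [this, integral_smul_const, integral_conj, smul_eq_mul, hA, Bf]
  have hL : (inner ℂ (P Φ) Ψ : ℂ) = ∫ u : bsp j, conj (A u) * B u := by
    rw [L2.inner_def]
    have hInt : Integrable (fun x : NBody N => (inner ℂ (P Φ x) (Ψ x) : ℂ)) volume :=
      L2.integrable_inner (𝕜 := ℂ) (P Φ) Ψ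
    have hcong : (fun x : NBody N => (inner ℂ (P Φ x) (Ψ x) : ℂ)) =ᵐ[volume]
        (fun x => conj (φ (x j) * A (rho j x)) * Ψ x) := by
      filter_upwards [form hP Φ] with x hx
      rw [RCLike.inner_apply, mul_comm (Ψ x), hx]
    rw [integral_congr_ae hcong, integral_hole j _ (hInt.congr hcong)]
    refine congrArg _ (funext fun u => ?_)
    simp only [gf_apply_j, rho_gf]
    have : (fun y : R3 => conj (φ y * A u) * Ψ (gf j u y))
        = fun y : R3 => conj (A u) • (conj (φ y) * Ψ (gf j u y)) := by
      funext y
      simp only [map_mul, smul_eq_mul]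
      ring
    rw [this, integral_smul, smul_eq_mul, hB, Bf]
  rw [hL, hR]

theorem proj_inv {φ : H1} (hφ : ‖φ‖ = 1) {i j : Fin N} (hij : i ≠ j) {Pi Pj : Op N}
    (hPi : IsCondProj N φ i Pi) (hPj : IsCondProj N φ j Pj) (f : HN N) (hf : Pj f = f) :
    Pj (Pi f) = Pi f := by
  apply Lp.ext
  set Bi := Bf φ i (⇑f) with hBi
  set Bj := Bf φ j (⇑f) with hBj
  have hfa : ∀ᵐ x : NBody N, f x = φ (x j) * Bj (rho j x) := by
    have h := form hPj f
    rw [hf] at h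
    exact h
  set C : NBody N → ℂ := fun x => ∫ y : R3, conj (φ y) * Bj (rho j (Function.update x i y))
    with hC
  have h8 : ∀ᵐ x : NBody N, Bi (rho i x) = φ (x j) * C x := by
    filter_upwards [ae_slice' i hfa] with x hx
    have hcong : (fun y : R3 => conj (φ y) * f (gf i (rho i x) y)) =ᵐ[volume]
        fun y : R3 => φ (x j) • (conj (φ y) * Bj (rho j (Function.update x i y))) := by
      filter_upwards [hx] with y hy
      rw [gf_rho_update, hy, Function.update_of_ne (Ne.symm hij), smul_eq_mul]
      ring
    rw [hBi, Bf, integral_congr_ae hcong, integral_smul, smul_eq_mul, hC]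
  have h45 : ∀ᵐ x : NBody N, ∀ᵐ w : R3, (Pi f) (Function.update x j w)
      = φ (x i) * (φ w * C x) := by
    have t0 : ∀ᵐ x : NBody N, ∀ᵐ y : R3, f (Function.update x i y)
        = φ (x j) * Bj (rho j (Function.update x i y)) := by
      filter_upwards [ae_slice' i hfa] with x hx
      filter_upwards [hx] with y hy
      rw [hy, Function.update_of_ne (Ne.symm hij)]
    have t1 : ∀ᵐ x : NBody N, ∀ᵐ w : R3, ∀ᵐ y : R3,
        f (Function.update (Function.update x j w) i y)
        = φ w * Bj (rho j (Function.update x i y)) := by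
      filter_upwards [ae_slice' j t0] with x hx
      filter_upwards [hx] with w hw
      filter_upwards [hw] with y hy
      have e1 : Function.update (Function.update x j w) i y
          = Function.update (Function.update x i y) j w :=
        Function.update_comm (Ne.symm hij) w y x
      rw [hy, Function.update_self, e1, rho_update]
    have t3 : ∀ᵐ x : NBody N, ∀ᵐ w : R3, (Pi f) (Function.update x j w)
        = φ (x i) * Bi (rho i (Function.update x j w)) := by
      filter_upwards [ae_slice' j (form hPi f)] with x hx
      filter_upwards [hx] with w hw
      rw [hw, Function.update_of_ne hij]
    have t4 : ∀ᵐ x : NBody N, ∀ᵐ w : R3, Bi (rho i (Function.update x j w)) = φ w * C x := by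
      filter_upwards [t1] with x hx
      filter_upwards [hx] with w hw
      have hcong : (fun y : R3 => conj (φ y) * f (gf i (rho i (Function.update x j w)) y))
          =ᵐ[volume] fun y : R3 => φ w • (conj (φ y) * Bj (rho j (Function.update x i y))) := by
        filter_upwards [hw] with y hy
        rw [gf_rho_update, hy, smul_eq_mul]
        ring
      rw [hBi, Bf, integral_congr_ae hcong, integral_smul, smul_eq_mul, hC]
    filter_upwards [t3, t4] with x e3 e4
    filter_upwards [e3, e4] with w f3 f4
    rw [f3, f4]
  have h6 : ∀ᵐ x : NBody N, Bf φ j (⇑(Pi f)) (rho j x) = φ (x i) * C x := by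
    filter_upwards [h45] with x hx
    have hcong : (fun w : R3 => conj (φ w) * (Pi f) (gf j (rho j x) w)) =ᵐ[volume]
        fun w : R3 => (conj (φ w) * φ w) • (φ (x i) * C x) := by
      filter_upwards [hx] with w hw
      rw [gf_rho_update, hw, smul_eq_mul]
      ring
    rw [Bf, integral_congr_ae hcong, integral_smul_const, phi_int hφ, one_smul]
  filter_upwards [form hPj (Pi f), form hPi f, h6, h8] with x e2 e1 e6 e8
  rw [e2, e6, e1, ← hBi, e8]
  ring

lemma proj_star {φ : H1} {j : Fin N} {P : Op N} (hP : IsCondProj N φ j P) : star P = P := by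
  rw [ContinuousLinearMap.star_eq_adjoint]
  exact ((ContinuousLinearMap.eq_adjoint_iff P P).mpr (fun Φ Ψ => proj_sa hP Φ Ψ)).symm

theorem proj_comm {φ : H1} (hφ : ‖φ‖ = 1) {i j : Fin N} (hij : i ≠ j) {Pi Pj : Op N}
    (hPi : IsCondProj N φ i Pi) (hPj : IsCondProj N φ j Pj) :
    Pi * Pj = Pj * Pi := by
  have star_i : star Pi = Pi := proj_star hPi
  have star_j : star Pj = Pj := proj_star hPj
  have h1 : Pj * (Pi * Pj) = Pi * Pj := by
    refine ContinuousLinearMap.ext fun Ψ => ?_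
    simp only [ContinuousLinearMap.mul_apply]
    exact proj_inv hφ hij hPi hPj (Pj Ψ) (proj_idem hφ hPj Ψ)
  have h2 : star (Pj * (Pi * Pj)) = star (Pi * Pj) := by rw [h1]
  rw [star_mul, star_mul, star_i, star_j] at h2
  rw [← mul_assoc] at h1
  rw [← h1]
  exact h2


section Alg

variable {N : ℕ} {p : Fin N → Op N}

def clo (p : Fin N → Op N) : Subring (Op N) := Subring.closure (Set.range p)

def cloCommRing (hcomm : ∀ i j : Fin N, p i * p j = p j * p i) : CommRing (clo p) :=
  Subring.closureCommRingOfComm (by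
    rintro _ ⟨i, rfl⟩ _ ⟨j, rfl⟩
    exact hcomm i j)

lemma mul_comm_clo (hcomm : ∀ i j : Fin N, p i * p j = p j * p i)
    (x y : clo p) : x * y = y * x := by
  letI := cloCommRing hcomm
  exact mul_comm x y

lemma star_of_mem_clo (hstar : ∀ i, star (p i) = p i)
    (hcomm : ∀ i j : Fin N, p i * p j = p j * p i) :
    ∀ x ∈ clo p, star x = x := by
  have comm : ∀ x ∈ clo p, ∀ y ∈ clo p, x * y = y * x := by
    intro x hx y hy
    exact congrArg Subtype.val (mul_comm_clo hcomm ⟨x, hx⟩ ⟨y, hy⟩)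
  intro x hx
  induction hx using Subring.closure_induction with
  | mem x hx =>
    obtain ⟨i, rfl⟩ := hx
    exact hstar i
  | zero => exact star_zero _
  | one => exact star_one _
  | add x y hx hy ihx ihy => rw [star_add, ihx, ihy]
  | neg x hx ihx => rw [star_neg, ihx]
  | mul x y hx hy ihx ihy => rw [star_mul, ihx, ihy, comm y hy x hx]

variable (p) in
def pc (i : Fin N) : clo p := ⟨p i, Subring.subset_closure ⟨i, rfl⟩⟩

variable (p) in
def qc (i : Fin N) : clo p := 1 - pc p i

lemma pc_idem (hidem : ∀ i, p i * p i = p i) (i : Fin N) : pc p i * pc p i = pc p i :=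
  Subtype.ext (hidem i)

lemma qc_idem (hidem : ∀ i, p i * p i = p i) (i : Fin N) : qc p i * qc p i = qc p i := by
  rw [qc, sub_mul, mul_sub, mul_sub, one_mul, mul_one, pc_idem hidem]
  simp

lemma qc_pc (hidem : ∀ i, p i * p i = p i) (i : Fin N) : qc p i * pc p i = 0 := by
  rw [qc, sub_mul, one_mul, pc_idem hidem, sub_self]

lemma pc_qc (hidem : ∀ i, p i * p i = p i) (i : Fin N) : pc p i * qc p i = 0 := by
  rw [qc, mul_sub, mul_one, pc_idem hidem, sub_self]

variable (p) in
def Lf (S : Finset (Fin N)) : clo p :=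
  (List.ofFn fun i : Fin N => if i ∈ S then qc p i else pc p i).prod

lemma Lf_eq_prod (hcomm : ∀ i j : Fin N, p i * p j = p j * p i) (S : Finset (Fin N)) :
    Lf p S = @Finset.prod _ _ (cloCommRing hcomm).toCommMonoid Finset.univ
      (fun i => if i ∈ S then qc p i else pc p i) := by
  letI := cloCommRing hcomm
  exact List.prod_ofFn

lemma Lf_sum (hcomm : ∀ i j : Fin N, p i * p j = p j * p i) :
    ∑ S ∈ (Finset.univ : Finset (Finset (Fin N))), Lf p S = 1 := by
  letI := cloCommRing hcomm
  have h2 : (∏ i : Fin N, (qc p i + pc p i)) = 1 := by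
    simp only [qc]
    exact Finset.prod_eq_one fun i _ => sub_add_cancel 1 (pc p i)
  rw [← h2, Finset.prod_add, Finset.powerset_univ]
  refine Finset.sum_congr rfl fun S _ => ?_
  rw [Lf_eq_prod hcomm, Finset.prod_ite, Finset.filter_mem_eq_inter, Finset.univ_inter,
    Finset.filter_not, Finset.filter_mem_eq_inter, Finset.univ_inter]

lemma Lf_mul_self (hidem : ∀ i, p i * p i = p i)
    (hcomm : ∀ i j : Fin N, p i * p j = p j * p i) (S : Finset (Fin N)) :
    Lf p S * Lf p S = Lf p S := by
  letI := cloCommRing hcomm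
  rw [Lf_eq_prod hcomm]
  refine Eq.trans Finset.prod_mul_distrib.symm ?_
  refine Finset.prod_congr rfl fun i _ => ?_
  by_cases h : i ∈ S
  · rw [if_pos h]; exact qc_idem hidem i
  · rw [if_neg h]; exact pc_idem hidem i

lemma Lf_mul_ne (hidem : ∀ i, p i * p i = p i)
    (hcomm : ∀ i j : Fin N, p i * p j = p j * p i)
    {S T : Finset (Fin N)} (hST : S ≠ T) : Lf p S * Lf p T = 0 := by
  letI := cloCommRing hcomm
  have : ∃ i, ¬ (i ∈ S ↔ i ∈ T) := by
    by_contra h'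
    push_neg at h'
    exact hST (Finset.ext fun i => h' i)
  obtain ⟨i, hi⟩ := this
  rw [Lf_eq_prod hcomm, Lf_eq_prod hcomm]
  refine Eq.trans Finset.prod_mul_distrib.symm ?_
  refine Finset.prod_eq_zero (Finset.mem_univ i) ?_
  by_cases hS : i ∈ S
  · have hT : i ∉ T := fun hT => hi (iff_of_true hS hT)
    rw [if_pos hS, if_neg hT]; exact qc_pc hidem i
  · have hT : i ∈ T := by
      by_contra hT
      exact hi (iff_of_false hS hT)
    rw [if_neg hS, if_pos hT]; exact pc_qc hidem i

variable (p) in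
def Pc (k : ℕ) : clo p :=
  ∑ S ∈ Finset.univ.filter (fun S : Finset (Fin N) => S.card = k), Lf p S

lemma lastIdx_self (N : ℕ) : lastIdx N N = Finset.univ := by
  ext i
  simp [lastIdx, Nat.sub_self]

lemma coe_Lf (S : Finset (Fin N)) : ((Lf p S : clo p) : Op N)
    = (List.ofFn fun i : Fin N => if i ∈ S then qOp p i else p i).prod := by
  calc ((Lf p S : clo p) : Op N)
      = (clo p).subtype (List.ofFn fun i : Fin N => if i ∈ S then qc p i else pc p i).prod := rfl
    _ = ((List.ofFn fun i : Fin N => if i ∈ S then qc p i else pc p i).map (clo p).subtype).prod :=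
        map_list_prod _ _
    _ = (List.ofFn ((clo p).subtype ∘ fun i : Fin N => if i ∈ S then qc p i else pc p i)).prod := by
        rw [List.map_ofFn]
    _ = (List.ofFn fun i : Fin N => if i ∈ S then qOp p i else p i).prod := by
        refine congrArg _ (congrArg List.ofFn (funext fun i => ?_))
        by_cases hi : i ∈ S <;> simp [hi, qOp, qc, pc]

lemma Pk_eq_coe (k : ℕ) : Pk p k = ((Pc p k : clo p) : Op N) := by
  rw [Pk, Pjk, Pc, AddSubmonoidClass.coe_finset_sum]
  rw [show Finset.univ.filter (fun S : Finset (Fin N) => S ⊆ lastIdx N N ∧ S.card = k)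
      = Finset.univ.filter (fun S : Finset (Fin N) => S.card = k) from
    Finset.filter_congr (by intro S _; rw [lastIdx_self]; simp [Finset.subset_univ])]
  refine Finset.sum_congr rfl fun S _ => ?_
  rw [coe_Lf]
  refine congrArg _ (congrArg List.ofFn (funext fun i => ?_))
  rw [lastIdx_self]
  simp only [Finset.mem_univ, if_true]

lemma Pc_mul (hidem : ∀ i, p i * p i = p i)
    (hcomm : ∀ i j : Fin N, p i * p j = p j * p i) (k l : ℕ) :
    Pc p k * Pc p l = if k = l then Pc p k else 0 := by
  rw [Pc, Pc, Finset.sum_mul_sum]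
  by_cases h : k = l
  · subst h
    rw [if_pos rfl]
    refine Finset.sum_congr rfl fun S hS => ?_
    rw [Finset.sum_eq_single S (fun T _ hne => Lf_mul_ne hidem hcomm (Ne.symm hne))
      (fun hn => absurd hS hn), Lf_mul_self hidem hcomm]
  · rw [if_neg h]
    refine Finset.sum_eq_zero fun S hS => Finset.sum_eq_zero fun T hT => ?_
    refine Lf_mul_ne hidem hcomm fun e => h ?_
    rw [Finset.mem_filter] at hS hT
    rw [← hS.2, ← hT.2, e]

lemma Pc_sum (hcomm : ∀ i j : Fin N, p i * p j = p j * p i) :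
    ∑ k ∈ Finset.range (N + 1), Pc p k = 1 := by
  rw [← Lf_sum hcomm]
  exact Finset.sum_fiberwise_of_maps_to
    (fun S _ => Finset.mem_range.mpr (Nat.lt_succ_of_le (by simpa using Finset.card_le_univ S))) _

lemma Pk_mul (hidem : ∀ i, p i * p i = p i)
    (hcomm : ∀ i j : Fin N, p i * p j = p j * p i) (k l : ℕ) :
    Pk p k * Pk p l = if k = l then Pk p k else 0 := by
  rw [Pk_eq_coe, Pk_eq_coe, ← MulMemClass.coe_mul, Pc_mul hidem hcomm]
  by_cases h : k = l <;> simp [h, Pk_eq_coe]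

lemma Pk_star (hstar : ∀ i, star (p i) = p i)
    (hcomm : ∀ i j : Fin N, p i * p j = p j * p i) (k : ℕ) :
    star (Pk p k) = Pk p k := by
  rw [Pk_eq_coe]
  exact star_of_mem_clo hstar hcomm _ (SetLike.coe_mem _)

lemma Pk_sum (hcomm : ∀ i j : Fin N, p i * p j = p j * p i) :
    ∑ k ∈ Finset.range (N + 1), Pk p k = 1 := by
  have h := congrArg (fun x : clo p => (x : Op N)) (Pc_sum hcomm)
  simpa [Pk_eq_coe, AddSubmonoidClass.coe_finset_sum] using h

section Hilb

variable (hidem : ∀ i, p i * p i = p i) (hstar : ∀ i, star (p i) = p i)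
  (hcomm : ∀ i j : Fin N, p i * p j = p j * p i) (Ψ : HN N)

include hidem hstar hcomm

lemma inner_Pk_self (k : ℕ) : (inner ℂ Ψ (Pk p k Ψ) : ℂ) = (‖Pk p k Ψ‖ : ℂ) ^ 2 := by
  have hmul := Pk_mul hidem hcomm k k
  rw [if_pos rfl] at hmul
  conv_lhs => rw [← hmul]
  rw [ContinuousLinearMap.mul_apply, ← ContinuousLinearMap.adjoint_inner_left,
    ← ContinuousLinearMap.star_eq_adjoint, Pk_star hstar hcomm]
  exact inner_self_eq_norm_sq_to_K _

lemma inner_Pk_ne {k l : ℕ} (h : k ≠ l) : (inner ℂ (Pk p k Ψ) (Pk p l Ψ) : ℂ) = 0 := by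
  have h1 : Pk p k = ContinuousLinearMap.adjoint (Pk p k) := by
    rw [← ContinuousLinearMap.star_eq_adjoint, Pk_star hstar hcomm]
  conv_lhs => rw [h1]
  rw [ContinuousLinearMap.adjoint_inner_left, ← ContinuousLinearMap.mul_apply,
    Pk_mul hidem hcomm, if_neg h]
  simp

lemma sum_w (hΨ : ‖Ψ‖ = 1) : ∑ k ∈ Finset.range (N + 1), ‖Pk p k Ψ‖ ^ 2 = 1 := by
  have h1 : (inner ℂ Ψ Ψ : ℂ) = ∑ k ∈ Finset.range (N + 1), (inner ℂ Ψ (Pk p k Ψ) : ℂ) := by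
    rw [← inner_sum]
    congr 1
    calc Ψ = (1 : Op N) Ψ := rfl
      _ = (∑ k ∈ Finset.range (N + 1), Pk p k) Ψ := by rw [Pk_sum hcomm]
      _ = _ := ContinuousLinearMap.sum_apply _ _ _
  have h2 : ((∑ k ∈ Finset.range (N + 1), ‖Pk p k Ψ‖ ^ 2 : ℝ) : ℂ) = ((1 : ℝ) : ℂ) := by
    push_cast
    rw [show (∑ k ∈ Finset.range (N + 1), (‖Pk p k Ψ‖ : ℂ) ^ 2)
        = ∑ k ∈ Finset.range (N + 1), (inner ℂ Ψ (Pk p k Ψ) : ℂ) from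
      Finset.sum_congr rfl fun k _ => (inner_Pk_self hidem hstar hcomm Ψ k).symm]
    rw [← h1, inner_self_eq_norm_sq_to_K, hΨ]
    norm_num
  exact_mod_cast h2

lemma inner_fhat (f : ℕ → ℝ) : (inner ℂ Ψ (fhat p f Ψ) : ℂ)
    = ((∑ k ∈ Finset.range (N + 1), f k * ‖Pk p k Ψ‖ ^ 2 : ℝ) : ℂ) := by
  rw [fhat, ContinuousLinearMap.sum_apply, inner_sum]
  push_cast
  refine Finset.sum_congr rfl fun k _ => ?_
  rw [Pi.smul_apply, inner_smul_right, inner_Pk_self hidem hstar hcomm]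

lemma inner_fhat_self (f : ℕ → ℝ) : (inner ℂ (fhat p f Ψ) (fhat p f Ψ) : ℂ)
    = ((∑ k ∈ Finset.range (N + 1), f k ^ 2 * ‖Pk p k Ψ‖ ^ 2 : ℝ) : ℂ) := by
  rw [fhat, ContinuousLinearMap.sum_apply, sum_inner]
  push_cast
  refine Finset.sum_congr rfl fun k hk => ?_
  rw [Pi.smul_apply, inner_smul_left, inner_sum]
  rw [Finset.sum_eq_single k ?ne (fun hk' => absurd hk hk')]
  · rw [Pi.smul_apply, inner_smul_right, inner_self_eq_norm_sq_to_K, Complex.conj_ofReal]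
    norm_cast
    push_cast
    try ring
    try rfl
    try exact rfl
  case ne =>
    intro l _ hne
    rw [Pi.smul_apply, inner_smul_right,
      inner_Pk_ne hidem hstar hcomm Ψ (Ne.symm hne)]
    simp

lemma norm_sq_fhat (f : ℕ → ℝ) :
    ‖fhat p f Ψ‖ ^ 2 = ∑ k ∈ Finset.range (N + 1), f k ^ 2 * ‖Pk p k Ψ‖ ^ 2 := by
  have h := inner_fhat_self hidem hstar hcomm Ψ f
  rw [inner_self_eq_norm_sq_to_K] at h
  exact Complex.ofReal_inj.mp (by push_cast at h ⊢; exact h)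

end Hilb

end Alg

section Glue

variable {N : ℕ} {φ : H1} {p : Fin N → Op N}
  (hφ : ‖φ‖ = 1) (hp : ∀ j, IsCondProj N φ j (p j))

include hφ hp

lemma hidem_of : ∀ i, p i * p i = p i := fun i =>
  ContinuousLinearMap.ext fun Ψ => by
    rw [ContinuousLinearMap.mul_apply]
    exact proj_idem hφ (hp i) Ψ

omit hφ in
lemma hstar_of : ∀ i, star (p i) = p i := fun i => proj_star (hp i)

lemma hcomm_of : ∀ i j : Fin N, p i * p j = p j * p i := fun i j => by
  by_cases h : i = j
  · rw [h]
  · exact proj_comm hφ h (hp i) (hp j)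

lemma momentWF_sum (Ψ : HN N) (γ : ℝ) :
    momentWF p Ψ γ = ∑ k ∈ Finset.range (N + 1), ((k : ℝ) / N) ^ (γ / 2 : ℝ) * ‖Pk p k Ψ‖ ^ 2 := by
  rw [momentWF, inner_fhat (hidem_of hφ hp) (hstar_of hp) (hcomm_of hφ hp)]
  exact Complex.ofReal_re _

lemma wsum_eq_one (Ψ : HN N) (hΨ : ‖Ψ‖ = 1) :
    ∑ k ∈ Finset.range (N + 1), ‖Pk p k Ψ‖ ^ 2 = 1 :=
  sum_w (hidem_of hφ hp) (hstar_of hp) (hcomm_of hφ hp) Ψ hΨ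

lemma norm_nhat_sq (Ψ : HN N) :
    ‖fhat p (nfun N) Ψ‖ ^ 2 = momentWF p Ψ 2 := by
  rw [norm_sq_fhat (hidem_of hφ hp) (hstar_of hp) (hcomm_of hφ hp), momentWF_sum hφ hp]
  refine Finset.sum_congr rfl fun k _ => ?_
  have h0 : (0 : ℝ) ≤ (k : ℝ) / N := div_nonneg (Nat.cast_nonneg k) (Nat.cast_nonneg N)
  rw [nfun, Real.sq_sqrt h0]
  norm_num

end Glue


lemma key_ineq {t ε a b : ℝ} (ht0 : 0 ≤ t) (ht1 : t ≤ 1) (hε : 0 < ε)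
    (ha : 0 < a) (hb : 0 < b) : t ^ a ≤ ε ^ a + ε ^ (-b) * t ^ b := by
  rcases le_or_gt t ε with h | h
  · have h1 : t ^ a ≤ ε ^ a := Real.rpow_le_rpow ht0 h ha.le
    have h2 : 0 ≤ ε ^ (-b) * t ^ b :=
      mul_nonneg (Real.rpow_nonneg hε.le _) (Real.rpow_nonneg ht0 _)
    linarith
  · have h1 : t ^ a ≤ 1 := Real.rpow_le_one ht0 ht1 ha.le
    have h2 : (1 : ℝ) ≤ ε ^ (-b) * t ^ b := by
      have he : ε ^ (-b) * ε ^ b = 1 := by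
        rw [← Real.rpow_add hε]
        simp
      calc (1 : ℝ) = ε ^ (-b) * ε ^ b := he.symm
        _ ≤ ε ^ (-b) * t ^ b :=
            mul_le_mul_of_nonneg_left (Real.rpow_le_rpow hε.le h.le hb.le)
              (Real.rpow_nonneg hε.le _)
    have h0 : 0 ≤ ε ^ a := Real.rpow_nonneg hε.le _
    linarith

lemma moment_nonneg {N : ℕ} {φ : H1} {p : Fin N → Op N}
    (hφ : ‖φ‖ = 1) (hp : ∀ j, IsCondProj N φ j (p j)) (Ψ : HN N) (γ : ℝ) :
    0 ≤ momentWF p Ψ γ := by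
  rw [momentWF_sum hφ hp]
  refine Finset.sum_nonneg fun k _ => mul_nonneg (Real.rpow_nonneg ?_ _) (sq_nonneg _)
  positivity

lemma moment_bound {N : ℕ} {φ : H1} {p : Fin N → Op N} (hN : 2 ≤ N)
    (hφ : ‖φ‖ = 1) (hp : ∀ j, IsCondProj N φ j (p j)) {Ψ : HN N} (hΨ : ‖Ψ‖ = 1)
    {jj ll ε : ℝ} (hj : 0 < jj) (hl : 0 < ll) (hε : 0 < ε) :
    momentWF p Ψ jj ≤ ε ^ (jj / 2 : ℝ) + ε ^ (-(ll / 2) : ℝ) * momentWF p Ψ ll := by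
  have hNpos : (0 : ℝ) < N := by
    have : (0 : ℕ) < N := lt_of_lt_of_le (by norm_num) hN
    exact_mod_cast this
  rw [momentWF_sum hφ hp, momentWF_sum hφ hp]
  calc ∑ k ∈ Finset.range (N + 1), ((k : ℝ) / N) ^ (jj / 2 : ℝ) * ‖Pk p k Ψ‖ ^ 2
      ≤ ∑ k ∈ Finset.range (N + 1),
        (ε ^ (jj / 2 : ℝ) + ε ^ (-(ll / 2) : ℝ) * ((k : ℝ) / N) ^ (ll / 2 : ℝ))
          * ‖Pk p k Ψ‖ ^ 2 := by
        refine Finset.sum_le_sum fun k hk => mul_le_mul_of_nonneg_right ?_ (sq_nonneg _)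
        have hk' : (k : ℝ) ≤ N := by
          have : k ≤ N := Nat.lt_succ_iff.mp (Finset.mem_range.mp hk)
          exact_mod_cast this
        exact key_ineq (div_nonneg (Nat.cast_nonneg k) hNpos.le)
          ((div_le_one hNpos).mpr hk') hε (half_pos hj) (half_pos hl)
    _ = ε ^ (jj / 2 : ℝ) * ∑ k ∈ Finset.range (N + 1), ‖Pk p k Ψ‖ ^ 2
        + ε ^ (-(ll / 2) : ℝ)
          * ∑ k ∈ Finset.range (N + 1), ((k : ℝ) / N) ^ (ll / 2 : ℝ) * ‖Pk p k Ψ‖ ^ 2 := by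
        simp_rw [add_mul, mul_assoc]
        rw [Finset.sum_add_distrib, ← Finset.mul_sum, ← Finset.mul_sum]
    _ = _ := by rw [wsum_eq_one hφ hp Ψ hΨ, mul_one]

lemma moments_equiv_aux {φ : H1} (hφ : ‖φ‖ = 1) {Ψ : (N : ℕ) → HN N}
    (hΨ : ∀ N, 2 ≤ N → ‖Ψ N‖ = 1) {p : (N : ℕ) → Fin N → Op N}
    (hp : ∀ N, 2 ≤ N → ∀ j, IsCondProj N φ j (p N j))
    {j l : ℝ} (hj : 0 < j) (hl : 0 < l)
    (hml : Tendsto (fun N => momentWF (p N) (Ψ N) l) atTop (nhds 0)) :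
    Tendsto (fun N => momentWF (p N) (Ψ N) j) atTop (nhds 0) := by
  rw [Metric.tendsto_atTop] at hml ⊢
  intro δ hδ
  set c : ℝ := (δ / 2) ^ (2 / j : ℝ) with hc
  have hcpos : 0 < c := Real.rpow_pos_of_pos (by linarith) _
  have hcj : c ^ (j / 2 : ℝ) = δ / 2 := by
    rw [hc, ← Real.rpow_mul (by linarith)]
    rw [show (2 / j) * (j / 2) = (1 : ℝ) by field_simp]
    exact Real.rpow_one _
  set K : ℝ := c ^ (-(l / 2) : ℝ) with hK
  have hKpos : 0 < K := Real.rpow_pos_of_pos hcpos _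
  obtain ⟨n₀, hn₀⟩ := hml (δ / (2 * K)) (by positivity)
  refine ⟨max n₀ 2, fun n hn => ?_⟩
  have hn2 : 2 ≤ n := le_trans (le_max_right _ _) hn
  have hnn : n₀ ≤ n := le_trans (le_max_left _ _) hn
  have hb := moment_bound hn2 hφ (hp n hn2) (hΨ n hn2) hj hl hcpos
  have hml' : momentWF (p n) (Ψ n) l < δ / (2 * K) := by
    have h := hn₀ n hnn
    rw [Real.dist_eq, sub_zero] at h
    exact lt_of_le_of_lt (le_abs_self _) h
  have hnn0 : 0 ≤ momentWF (p n) (Ψ n) j := moment_nonneg hφ (hp n hn2) _ _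
  rw [Real.dist_eq, sub_zero, abs_of_nonneg hnn0]
  calc momentWF (p n) (Ψ n) j ≤ c ^ (j / 2 : ℝ) + K * momentWF (p n) (Ψ n) l := hb
    _ < δ / 2 + K * (δ / (2 * K)) := by
        rw [hcj]
        exact add_lt_add_of_le_of_lt le_rfl (mul_lt_mul_of_pos_left hml' hKpos)
    _ = δ := by field_simp; ring

theorem main
    (φ : H1) (hφ : ‖φ‖ = 1)
    (Ψ : (N : ℕ) → HN N) (hΨ : ∀ N, 2 ≤ N → ‖Ψ N‖ = 1)
    (p : (N : ℕ) → Fin N → Op N)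
    (hp : ∀ N, 2 ≤ N → ∀ j, IsCondProj N φ j (p N j)) :
    (∀ j l : ℝ, 0 < j → 0 < l →
      Tendsto (fun N => momentWF (p N) (Ψ N) l) atTop (nhds 0) →
      Tendsto (fun N => momentWF (p N) (Ψ N) j) atTop (nhds 0)) ∧
    (∀ j : ℝ, 0 < j →
      (Tendsto (fun N => ‖(fhat (p N) (nfun N)) (Ψ N)‖) atTop (nhds 0) ↔
        Tendsto (fun N => momentWF (p N) (Ψ N) j) atTop (nhds 0))) := by
  constructor
  · intro j l hj hl hml
    exact moments_equiv_aux hφ hΨ hp hj hl hml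
  · intro j hj
    constructor
    · intro hnrm
      have h2 : Tendsto (fun N => momentWF (p N) (Ψ N) 2) atTop (nhds 0) := by
        have hsq : Tendsto (fun N => ‖fhat (p N) (nfun N) (Ψ N)‖ ^ 2) atTop (nhds 0) := by
          simpa using hnrm.pow 2
        refine hsq.congr' ?_
        filter_upwards [eventually_ge_atTop 2] with N hN
        exact norm_nhat_sq hφ (hp N hN) (Ψ N)
      exact moments_equiv_aux hφ hΨ hp hj two_pos h2
    · intro hmj
      have h2 : Tendsto (fun N => momentWF (p N) (Ψ N) 2) atTop (nhds 0) :=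
        moments_equiv_aux hφ hΨ hp two_pos hj hmj
      have hsqrt : Tendsto (fun N => Real.sqrt (momentWF (p N) (Ψ N) 2)) atTop (nhds 0) := by
        simpa using h2.sqrt
      refine hsqrt.congr' ?_
      filter_upwards [eventually_ge_atTop 2] with N hN
      rw [← norm_nhat_sq hφ (hp N hN) (Ψ N), Real.sqrt_sq (norm_nonneg _)]

end Moments

/-- Equivalence of the moments of the relative particle number. -/
theorem moments_of_relative_particle_number_equivalent
    (φ : H1) (hφ : ‖φ‖ = 1)
    (Ψ : (N : ℕ) → HN N) (hΨ : ∀ N, 2 ≤ N → ‖Ψ N‖ = 1)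
    (p : (N : ℕ) → Fin N → Op N)
    (hp : ∀ N, 2 ≤ N → ∀ j, IsCondProj N φ j (p N j)) :
    (∀ j l : ℝ, 0 < j → 0 < l →
      Tendsto (fun N => momentWF (p N) (Ψ N) l) atTop (nhds 0) →
      Tendsto (fun N => momentWF (p N) (Ψ N) j) atTop (nhds 0)) ∧
    (∀ j : ℝ, 0 < j →
      (Tendsto (fun N => ‖(fhat (p N) (nfun N)) (Ψ N)‖) atTop (nhds 0) ↔
        Tendsto (fun N => momentWF (p N) (Ψ N) j) atTop (nhds 0))) := Moments.main φ hφ Ψ hΨ p hp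

end
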